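/- For any integers n ≥ 1, l ≥ 0, and any k with 1 ≤ k ≤ n, and any indices 1 ≤ m₁ < m₂ < ⋯ < m_k ≤ n, the sum over all tuples L = (l₁,…,l_n) of non-negative integers with l₁+⋯+l_n = l of the product l_{m₁}·l_{m₂}⋯l_{m_k} equals the binomial coefficient C(n+l-1, n+k-1). -/

import Mathlib

open Finset

/-- Hockey stick with a shift. -/
lemma aux_hs (s r : ℕ) (h : s ≤ r) :
    ∀ B : ℕ, ∑ b ∈ Finset.range B, (b + s).choose r = (B + s).choose (r + 1) := by
  intro B
  induction B with
  | zero => simp [Nat.choose_eq_zero_of_lt (Nat.lt_succ_of_le h)]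
  | succ B ih =>
      rw [Finset.sum_range_succ, ih, show B + 1 + s = B + s + 1 by omega,
        Nat.choose_succ_succ' (B + s) r, Nat.add_comm]

lemma aux_snd (g : ℕ → ℕ) (l : ℕ) :
    ∑ p ∈ Finset.HasAntidiagonal.antidiagonal l, g p.2 = ∑ j ∈ Finset.range (l + 1), g j := by
  rw [Finset.Nat.sum_antidiagonal_eq_sum_range_succ (fun a b => g b) l]
  have := Finset.sum_range_reflect g (l + 1)
  simpa using this

lemma aux_snd_choose (s r l : ℕ) (h : s ≤ r) :
    ∑ p ∈ Finset.HasAntidiagonal.antidiagonal l, (p.2 + s).choose r = (l + 1 + s).choose (r + 1) := by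
  rw [aux_snd (fun b => (b + s).choose r) l, aux_hs s r h]

lemma aux_conv (s r : ℕ) (h : s ≤ r) :
    ∀ l : ℕ, ∑ p ∈ Finset.HasAntidiagonal.antidiagonal l, p.1 * (p.2 + s).choose r
      = (l + s + 1).choose (r + 2) := by
  intro l
  induction l with
  | zero => simp [Nat.choose_eq_zero_of_lt (by omega : s + 1 < r + 2)]
  | succ l ih =>
      rw [Finset.Nat.sum_antidiagonal_succ]
      simp only [Nat.zero_mul, Nat.zero_add, Nat.add_mul, Nat.one_mul]
      rw [Finset.sum_add_distrib, ih, aux_snd_choose s r l h]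
      rw [show l + 1 + s + 1 = (l + s + 1) + 1 by omega,
        Nat.choose_succ_succ' (l + s + 1) (r + 1),
        show r + 1 + 1 = r + 2 from rfl, show l + 1 + s = l + s + 1 by omega]
      omega

/-- Decomposition of a sum over `antidiagonalTuple (n+1) l`. -/
lemma aux_sum_adt_succ (n l : ℕ) (f : (Fin (n + 1) → ℕ) → ℕ) :
    ∑ L ∈ Finset.Nat.antidiagonalTuple (n + 1) l, f L
      = ∑ p ∈ Finset.HasAntidiagonal.antidiagonal l,
          ∑ x ∈ Finset.Nat.antidiagonalTuple n p.2, f (Fin.cons p.1 x) := by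
  rw [← Finset.sum_sigma (Finset.HasAntidiagonal.antidiagonal l)
      (fun p => Finset.Nat.antidiagonalTuple n p.2)
      (fun q => f (Fin.cons q.1.1 q.2))]
  refine (Finset.sum_nbij' (fun q => Fin.cons q.1.1 q.2)
    (fun L => ⟨(L 0, ∑ i, Fin.tail L i), Fin.tail L⟩) ?_ ?_ ?_ ?_ ?_).symm
  · rintro ⟨⟨a, b⟩, x⟩ hq
    simp only [Finset.mem_sigma, Finset.HasAntidiagonal.mem_antidiagonal,
      Finset.Nat.mem_antidiagonalTuple] at hq ⊢
    rw [Fin.sum_cons, hq.2, hq.1]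
  · intro L hL
    simp only [Finset.Nat.mem_antidiagonalTuple, Fin.sum_univ_succ] at hL
    simp only [Finset.mem_sigma, Finset.HasAntidiagonal.mem_antidiagonal,
      Finset.Nat.mem_antidiagonalTuple]
    exact ⟨hL, trivial⟩
  · rintro ⟨⟨a, b⟩, x⟩ hq
    simp only [Finset.mem_sigma, Finset.HasAntidiagonal.mem_antidiagonal,
      Finset.Nat.mem_antidiagonalTuple] at hq
    simp [Fin.tail_cons, hq.2]
  · intro L hL
    simp [Fin.cons_self_tail]
  · rintro ⟨⟨a, b⟩, x⟩ hq
    rfl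

/-- Key lemma: the weighted sum, with multiplicities `c i ≤ 1`. -/
lemma aux_key : ∀ (n : ℕ), 1 ≤ n → ∀ (l : ℕ) (c : Fin n → ℕ), (∀ i, c i ≤ 1) →
    ∑ L ∈ Finset.Nat.antidiagonalTuple n l, ∏ i, (L i) ^ (c i)
      = (n + l - 1).choose (n + (∑ i, c i) - 1) := by
  intro n
  induction n with
  | zero => omega
  | succ m ih =>
      intro _ l c hc
      match m, ih with
      | 0, _ =>
          rw [Finset.Nat.antidiagonalTuple_one, Finset.sum_singleton]
          have h0 : c 0 ≤ 1 := hc 0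
          have hsum : ∑ i, c i = c 0 := by simp [Fin.sum_univ_one]
          rw [hsum, Fin.prod_univ_one]
          interval_cases h : c 0 <;> simp
      | m + 1, ih =>
          have hm : 1 ≤ m + 1 := by omega
          rw [aux_sum_adt_succ (m + 1) l (fun L => ∏ i, (L i) ^ (c i))]
          have hterm : ∀ p ∈ Finset.HasAntidiagonal.antidiagonal l,
              ∑ x ∈ Finset.Nat.antidiagonalTuple (m + 1) p.2,
                ∏ i, ((Fin.cons p.1 x : Fin (m + 2) → ℕ) i) ^ (c i)
              = p.1 ^ (c 0) * (m + 1 + p.2 - 1).choose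
                  (m + 1 + (∑ i : Fin (m + 1), c i.succ) - 1) := by
            intro p _
            rw [← ih hm p.2 (fun i : Fin (m + 1) => c i.succ) (fun i => hc i.succ),
              Finset.mul_sum]
            refine Finset.sum_congr rfl fun x _ => ?_
            rw [Fin.prod_univ_succ]
            simp
          rw [Finset.sum_congr rfl hterm]
          set k' := ∑ i, c (Fin.succ i) with hk'
          have hsum : ∑ i, c i = c 0 + k' := by rw [Fin.sum_univ_succ]
          have hc0 : c 0 ≤ 1 := hc 0
          have hkk : k' ≤ m + 1 := by
            calc k' ≤ ∑ _i : Fin (m + 1), 1 :=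
                  Finset.sum_le_sum (fun i _ => hc i.succ)
              _ = m + 1 := by simp
          interval_cases h0 : c 0
          · simp only [pow_zero, one_mul]
            have := aux_snd_choose m (m + k') l (by omega)
            have heq : ∀ p : ℕ × ℕ, (m + 1 + p.2 - 1).choose (m + 1 + k' - 1)
                = (p.2 + m).choose (m + k') := by
              intro p; congr 1 <;> omega
            simp only [heq]
            rw [this, hsum]
            congr 1 <;> omega
          · simp only [pow_one]
            have heq : ∀ p : ℕ × ℕ, p.1 * (m + 1 + p.2 - 1).choose (m + 1 + (1 + k') - 1)
                = p.1 * (p.2 + m).choose (m + k' + 1) := by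
              intro p; congr 2 <;> omega
            have h1 : ∀ p : ℕ × ℕ, m + 1 + (∑ i : Fin (m+1), c (Fin.succ i)) - 1 = m + k' + 1 - 1 := by
              intro _; omega
            calc ∑ p ∈ Finset.HasAntidiagonal.antidiagonal l,
                  p.1 * (m + 1 + p.2 - 1).choose (m + 1 + k' - 1)
                = ∑ p ∈ Finset.HasAntidiagonal.antidiagonal l, p.1 * (p.2 + m).choose (m + k') := by
                  refine Finset.sum_congr rfl fun p _ => ?_
                  congr 2 <;> omega
              _ = (l + m + 1).choose (m + k' + 2) := aux_conv m (m + k') (by omega) l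
              _ = (m + 2 + l - 1).choose (m + 2 + (∑ i, c i) - 1) := by
                  rw [hsum]; congr 1 <;> omega

theorem stmt0 (n l k : ℕ) (hn : 1 ≤ n) (hk : 1 ≤ k) (hkn : k ≤ n)
    (m : Fin k → Fin n) (hm : StrictMono m) :
    ∑ L ∈ Finset.Nat.antidiagonalTuple n l, ∏ i, L (m i)
      = Nat.choose (n + l - 1) (n + k - 1) := by
  classical
  set c : Fin n → ℕ := fun j => (Finset.univ.filter (fun i => m i = j)).card with hc
  have hinj : Function.Injective m := hm.injective
  have hc1 : ∀ j, c j ≤ 1 := by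
    intro j
    refine Finset.card_le_one.mpr fun a ha b hb => ?_
    simp only [Finset.mem_filter] at ha hb
    exact hinj (ha.2.trans hb.2.symm)
  have hsum : ∑ j, c j = k := by
    have := Finset.card_eq_sum_card_fiberwise
      (f := m) (s := (Finset.univ : Finset (Fin k))) (t := Finset.univ)
      (fun x _ => Finset.mem_univ _)
    simpa using this.symm
  have hprod : ∀ L : Fin n → ℕ, ∏ i, L (m i) = ∏ j, (L j) ^ (c j) := by
    intro L
    rw [← Finset.prod_fiberwise_of_maps_to
      (g := m) (s := (Finset.univ : Finset (Fin k))) (t := Finset.univ)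
      (fun x _ => Finset.mem_univ _) (fun i => L (m i))]
    refine Finset.prod_congr rfl fun j _ => ?_
    calc ∏ i ∈ Finset.univ.filter (fun i => m i = j), L (m i)
        = ∏ _i ∈ Finset.univ.filter (fun i => m i = j), L j := by
          refine Finset.prod_congr rfl fun i hi => ?_
          simp only [Finset.mem_filter] at hi
          rw [hi.2]
      _ = (L j) ^ (c j) := by rw [Finset.prod_const]
  calc ∑ L ∈ Finset.Nat.antidiagonalTuple n l, ∏ i, L (m i)
      = ∑ L ∈ Finset.Nat.antidiagonalTuple n l, ∏ j, (L j) ^ (c j) :=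
        Finset.sum_congr rfl fun L _ => hprod L
    _ = (n + l - 1).choose (n + (∑ j, c j) - 1) := aux_key n hn l c hc1
    _ = (n + l - 1).choose (n + k - 1) := by rw [hsum]
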